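/- For every α ∈ (0, 1/2) and every T > 0 there exists a constant C > 0 (depending only on α and T) such that for all t, t̄ with 0 ≤ t ≤ t̄ ≤ T and all x, x̄ ∈ [0,1], ∫₀ᵗ ∫₀¹ |G^N_{t−s}(x,y) − G^N_{t̄−s}(x̄,y)|² dy ds ≤ C · (|x̄ − x|^{2α} + |t̄ − t|^{α}). -/

import Mathlib

open Real MeasureTheory

/-- The Neumann heat kernel on `[0,1]`:
`G^N_t(x,y) = 1 + 2 ∑_{k=1}^∞ e^{-k²π²t} cos(kπx) cos(kπy)`. -/
noncomputable def GN (t x y : ℝ) : ℝ :=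
  1 + 2 * ∑' k : ℕ, Real.exp (-((k + 1 : ℝ) ^ 2 * π ^ 2 * t)) *
      Real.cos ((k + 1 : ℝ) * π * x) * Real.cos ((k + 1 : ℝ) * π * y)

noncomputable def lam (k : ℕ) : ℝ := ((k : ℝ) + 1) ^ 2 * π ^ 2

noncomputable def phi (k : ℕ) (y : ℝ) : ℝ := Real.cos (((k : ℝ) + 1) * π * y)

noncomputable def coefG (t x : ℝ) (k : ℕ) : ℝ :=
  Real.exp (-(lam k * t)) * Real.cos (((k : ℝ) + 1) * π * x)

lemma lam_pos (k : ℕ) : 0 < lam k := by unfold lam; positivity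

lemma sq_le_lam (k : ℕ) : ((k : ℝ) + 1) ^ 2 ≤ lam k := by
  unfold lam
  have h1 : (1:ℝ) ≤ π ^ 2 := by nlinarith [Real.pi_gt_three]
  nlinarith [sq_nonneg ((k : ℝ) + 1)]

lemma phi_cont (k : ℕ) : Continuous (phi k) :=
  Real.continuous_cos.comp (continuous_const.mul continuous_id)

lemma abs_coefG_le (t x : ℝ) (k : ℕ) : |coefG t x k| ≤ Real.exp (-(lam k * t)) := by
  unfold coefG
  rw [abs_mul, Real.abs_exp]
  exact mul_le_of_le_one_right (Real.exp_pos _).le (Real.abs_cos_le_one _)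

lemma GN_eq (t x y : ℝ) : GN t x y = 1 + 2 * ∑' k, coefG t x k * phi k y := rfl

lemma cos_lip (a b : ℝ) : |Real.cos a - Real.cos b| ≤ |a - b| := by
  rw [Real.cos_sub_cos]
  calc |(-2) * Real.sin ((a + b) / 2) * Real.sin ((a - b) / 2)|
      = 2 * |Real.sin ((a + b) / 2)| * |Real.sin ((a - b) / 2)| := by
        rw [abs_mul, abs_mul]; norm_num
    _ ≤ 2 * 1 * (|a - b| / 2) := by
        have h1 : |Real.sin ((a + b) / 2)| ≤ 1 := Real.abs_sin_le_one _
        have h2 : |Real.sin ((a - b) / 2)| ≤ |a - b| / 2 := by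
          calc |Real.sin ((a - b) / 2)| ≤ |(a - b) / 2| := Real.abs_sin_le_abs
            _ = |a - b| / 2 := by rw [abs_div, abs_two]
        have h0 : (0:ℝ) ≤ |Real.sin ((a - b) / 2)| := abs_nonneg _
        nlinarith [abs_nonneg (Real.sin ((a + b) / 2))]
    _ = |a - b| := by ring

lemma summable_exp_lam {a : ℝ} (ha : 0 < a) :
    Summable fun k : ℕ => Real.exp (-(lam k * a)) := by
  have hr0 : 0 < Real.exp (-(π ^ 2 * a)) := Real.exp_pos _
  have hr1 : Real.exp (-(π ^ 2 * a)) < 1 := by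
    rw [Real.exp_lt_one_iff]
    nlinarith [mul_pos (pow_pos Real.pi_pos 2) ha]
  refine Summable.of_nonneg_of_le (fun k => (Real.exp_pos _).le) (fun k => ?_)
    (((summable_geometric_of_lt_one hr0.le hr1).mul_left (Real.exp (-(π ^ 2 * a)))))
  have h1 : (k : ℝ) + 1 ≤ ((k : ℝ) + 1) ^ 2 := by nlinarith [Nat.cast_nonneg (α := ℝ) k]
  calc Real.exp (-(lam k * a)) ≤ Real.exp (-(((k : ℝ) + 1) * (π ^ 2 * a))) := by
        apply Real.exp_le_exp.2
        unfold lam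
        nlinarith [mul_pos (pow_pos Real.pi_pos 2) ha, h1]
    _ = Real.exp (-(π ^ 2 * a)) * Real.exp (-(π ^ 2 * a)) ^ k := by
        rw [← Real.exp_nat_mul, ← Real.exp_add]; ring_nf

lemma int_cos_mul (c : ℝ) :
    ∫ y in (0:ℝ)..1, Real.cos (c * y) = if c = 0 then 1 else Real.sin c / c := by
  rcases eq_or_ne c 0 with rfl | hc
  · simp
  · rw [if_neg hc]
    have : ∀ y ∈ Set.uIcc (0:ℝ) 1,
        HasDerivAt (fun y => Real.sin (c * y) / c) (Real.cos (c * y)) y := by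
      intro y _
      have h : HasDerivAt (fun y => Real.sin (c * y)) (Real.cos (c * y) * c) y := by
        exact ((Real.hasDerivAt_sin (c * y)).comp y ((hasDerivAt_id y).const_mul c)).congr_deriv (by ring)
      have h2 := h.div_const c
      rwa [mul_div_cancel_right₀ _ hc] at h2
    rw [intervalIntegral.integral_eq_sub_of_hasDerivAt this
      ((Real.continuous_cos.comp (continuous_const.mul continuous_id)).intervalIntegrable 0 1)]
    simp

lemma int_cos_int_mul_pi (m : ℤ) :
    ∫ y in (0:ℝ)..1, Real.cos ((m : ℝ) * π * y) = if m = 0 then 1 else 0 := by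
  rcases eq_or_ne m 0 with rfl | hm
  · simp
  · rw [if_neg hm]
    have hc : (m : ℝ) * π ≠ 0 := mul_ne_zero (Int.cast_ne_zero.2 hm) Real.pi_ne_zero
    rw [int_cos_mul ((m : ℝ) * π), if_neg hc, Real.sin_int_mul_pi, zero_div]

lemma ortho (j k : ℕ) : ∫ y in (0:ℝ)..1, phi j y * phi k y = if j = k then 1/2 else 0 := by
  have hrw : ∀ y : ℝ, phi j y * phi k y =
      (Real.cos (((j : ℤ) + (k : ℤ) + 2 : ℤ) * π * y)
        + Real.cos (((j : ℤ) - (k : ℤ) : ℤ) * π * y)) / 2 := by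
    intro y
    unfold phi
    have h1 := Real.cos_add (((j : ℝ) + 1) * π * y) (((k : ℝ) + 1) * π * y)
    have h2 := Real.cos_sub (((j : ℝ) + 1) * π * y) (((k : ℝ) + 1) * π * y)
    have e1 : (((j : ℤ) + (k : ℤ) + 2 : ℤ) : ℝ) * π * y
        = ((j : ℝ) + 1) * π * y + ((k : ℝ) + 1) * π * y := by push_cast; ring
    have e2 : (((j : ℤ) - (k : ℤ) : ℤ) : ℝ) * π * y
        = ((j : ℝ) + 1) * π * y - ((k : ℝ) + 1) * π * y := by push_cast; ring
    rw [e1, e2, h1, h2]; ring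
  rw [intervalIntegral.integral_congr (fun y _ => hrw y)]
  have hint : ∀ m : ℤ, IntervalIntegrable (fun y => Real.cos ((m : ℝ) * π * y)) volume 0 1 :=
    fun m => (Real.continuous_cos.comp (continuous_const.mul continuous_id)).intervalIntegrable 0 1
  rw [intervalIntegral.integral_div, intervalIntegral.integral_add (hint _) (hint _),
    int_cos_int_mul_pi, int_cos_int_mul_pi]
  have h2 : ((j : ℤ) + (k : ℤ) + 2) ≠ 0 := by omega
  rcases eq_or_ne j k with rfl | hjk
  · simp [h2]
  · have hne : (j : ℤ) ≠ (k : ℤ) := by exact_mod_cast hjk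
    have : (j : ℤ) - (k : ℤ) ≠ 0 := sub_ne_zero.2 hne
    simp [h2, this, hjk]

lemma parseval (d : ℕ → ℝ) (hd : Summable fun k => |d k|) :
    ∫ y in (0:ℝ)..1, (∑' k, d k * phi k y) ^ 2 = ∑' k, d k ^ 2 / 2 := by
  set D := fun y => ∑' k, d k * phi k y with hDdef
  have habs : ∀ y k, |d k * phi k y| ≤ |d k| := by
    intro y k
    rw [abs_mul]
    exact mul_le_of_le_one_right (abs_nonneg _) (Real.abs_cos_le_one _)
  have hsum : ∀ y, Summable fun k => d k * phi k y := fun y =>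
    (hd.of_nonneg_of_le (fun k => abs_nonneg _) (habs y)).of_abs
  have hHasSum : ∀ y, HasSum (fun k => d k * phi k y) (D y) := fun y => (hsum y).hasSum
  set M := ∑' k, |d k| with hMdef
  have hM : ∀ y, |D y| ≤ M := by
    intro y
    have h1 : Summable fun k => |d k * phi k y| :=
      hd.of_nonneg_of_le (fun k => abs_nonneg _) (habs y)
    have h2 : |D y| ≤ ∑' k, |d k * phi k y| := by
      have := norm_tsum_le_tsum_norm (f := fun k => d k * phi k y)
        (by simpa only [Real.norm_eq_abs] using h1)
      simpa only [Real.norm_eq_abs] using this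
    exact h2.trans (Summable.tsum_le_tsum (habs y) h1 hd)
  have hDcont : Continuous D :=
    continuous_tsum (fun k => continuous_const.mul (phi_cont k)) hd
      (fun k y => by simpa only [Real.norm_eq_abs] using habs y k)
  have ortho' : ∀ j k : ℕ, ∫ y in Set.Ioc (0:ℝ) 1, phi j y * phi k y
      = if j = k then 1/2 else 0 := by
    intro j k
    rw [← intervalIntegral.integral_of_le zero_le_one]
    exact ortho j k
  have key1 : HasSum (fun k => ∫ y in Set.Ioc (0:ℝ) 1, d k * phi k y * D y)
      (∫ y in Set.Ioc (0:ℝ) 1, D y * D y) := by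
    apply MeasureTheory.hasSum_integral_of_dominated_convergence (bound := fun k y => |d k| * M)
    · exact fun k => ((continuous_const.mul (phi_cont k)).mul hDcont).aestronglyMeasurable
    · intro k
      filter_upwards with y
      rw [Real.norm_eq_abs, abs_mul]
      exact mul_le_mul (habs y k) (hM y) (abs_nonneg _) (abs_nonneg _)
    · filter_upwards with y
      exact hd.mul_right M
    · have hc : (fun _ : ℝ => ∑' k, |d k| * M) = fun _ : ℝ => M * M := by
        funext y; rw [tsum_mul_right]
      rw [hc]
      exact integrableOn_const measure_Ioc_lt_top.ne
    · filter_upwards with y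
      exact (hHasSum y).mul_right (D y)
  have key2 : ∀ k, ∫ y in Set.Ioc (0:ℝ) 1, d k * phi k y * D y = d k * d k / 2 := by
    intro k
    have h2 : HasSum (fun j => ∫ y in Set.Ioc (0:ℝ) 1, d k * phi k y * (d j * phi j y))
        (∫ y in Set.Ioc (0:ℝ) 1, d k * phi k y * D y) := by
      apply MeasureTheory.hasSum_integral_of_dominated_convergence
        (bound := fun j _ => |d k| * |d j|)
      · exact fun j => ((continuous_const.mul (phi_cont k)).mul
          (continuous_const.mul (phi_cont j))).aestronglyMeasurable
      · intro j
        filter_upwards with y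
        rw [Real.norm_eq_abs, abs_mul]
        exact mul_le_mul (habs y k) (habs y j) (abs_nonneg _) (abs_nonneg _)
      · filter_upwards with y
        exact hd.mul_left _
      · have hc : (fun _ : ℝ => ∑' j, |d k| * |d j|) = fun _ : ℝ => |d k| * M := by
          funext y; rw [tsum_mul_left]
        rw [hc]
        exact integrableOn_const measure_Ioc_lt_top.ne
      · filter_upwards with y
        exact (hHasSum y).mul_left (d k * phi k y)
    have h3 : ∀ j, ∫ y in Set.Ioc (0:ℝ) 1, d k * phi k y * (d j * phi j y)
        = d k * d j * (if k = j then 1/2 else 0) := by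
      intro j
      have hy : ∀ y : ℝ, d k * phi k y * (d j * phi j y)
          = (d k * d j) * (phi k y * phi j y) := by intro y; ring
      simp_rw [hy]
      rw [MeasureTheory.integral_const_mul, ortho' k j]
    rw [← h2.tsum_eq, tsum_congr h3, tsum_eq_single k]
    · rw [if_pos rfl]; ring
    · intro j hj
      rw [if_neg (fun h => hj h.symm), mul_zero]
  rw [intervalIntegral.integral_of_le zero_le_one]
  simp_rw [pow_two]
  rw [← key1.tsum_eq]
  exact tsum_congr key2

lemma GN_sub {a b : ℝ} (ha : 0 < a) (hb : 0 < b) (x x' y : ℝ) :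
    GN a x y - GN b x' y = ∑' k, (2 * (coefG a x k - coefG b x' k)) * phi k y := by
  have habs : ∀ (t : ℝ) (z : ℝ) (k : ℕ), |coefG t z k * phi k y| ≤ Real.exp (-(lam k * t)) := by
    intro t z k
    rw [abs_mul]
    calc |coefG t z k| * |phi k y| ≤ |coefG t z k| * 1 :=
          mul_le_mul_of_nonneg_left (Real.abs_cos_le_one _) (abs_nonneg _)
      _ = |coefG t z k| := mul_one _
      _ ≤ Real.exp (-(lam k * t)) := abs_coefG_le t z k
  have h1 : Summable fun k => coefG a x k * phi k y :=
    ((summable_exp_lam ha).of_nonneg_of_le (fun k => abs_nonneg _) (habs a x)).of_abs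
  have h2 : Summable fun k => coefG b x' k * phi k y :=
    ((summable_exp_lam hb).of_nonneg_of_le (fun k => abs_nonneg _) (habs b x')).of_abs
  calc GN a x y - GN b x' y
      = 2 * ((∑' k, coefG a x k * phi k y) - ∑' k, coefG b x' k * phi k y) := by
        rw [GN_eq, GN_eq]; ring
    _ = 2 * ∑' k, (coefG a x k * phi k y - coefG b x' k * phi k y) := by
        rw [Summable.tsum_sub h1 h2]
    _ = ∑' k, 2 * (coefG a x k * phi k y - coefG b x' k * phi k y) := tsum_mul_left.symm
    _ = ∑' k, (2 * (coefG a x k - coefG b x' k)) * phi k y := tsum_congr fun k => by ring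

lemma int_exp_bound {c t : ℝ} (hc : 0 < c) (ht : 0 ≤ t) :
    ∫ s in Set.Ioo (0:ℝ) t, Real.exp (-(c * (t - s))) ≤ 1 / c := by
  rw [← MeasureTheory.integral_Ioc_eq_integral_Ioo, ← intervalIntegral.integral_of_le ht]
  have hderiv : ∀ s ∈ Set.uIcc (0:ℝ) t,
      HasDerivAt (fun s => Real.exp (-(c * (t - s))) / c) (Real.exp (-(c * (t - s)))) s := by
    intro s _
    have h0 : HasDerivAt (fun s : ℝ => -(c * (t - s))) c s := by
      exact (((hasDerivAt_id s).const_sub t).const_mul c).neg.congr_deriv (by ring)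
    have h := (Real.hasDerivAt_exp _).comp s h0
    have h2 := h.div_const c
    rwa [mul_div_cancel_right₀ _ (ne_of_gt hc)] at h2
  rw [intervalIntegral.integral_eq_sub_of_hasDerivAt hderiv
    ((Real.continuous_exp.comp (by continuity)).intervalIntegrable 0 t)]
  have hpos : 0 ≤ Real.exp (-(c * (t - 0))) / c := by positivity
  have : Real.exp (-(c * (t - t))) / c = 1 / c := by
    rw [sub_self, mul_zero, neg_zero, Real.exp_zero]
  linarith [this]

lemma min_le_rpow_mul {a b θ : ℝ} (ha : 0 ≤ a) (hb : 0 ≤ b) (h0 : 0 < θ) (h1 : θ < 1) :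
    min a b ≤ a ^ (1 - θ) * b ^ θ := by
  have hsum : (1 - θ) + θ ≠ 0 := by norm_num
  rcases le_total a b with h | h
  · rw [min_eq_left h]
    calc a = a ^ (1 - θ) * a ^ θ := by
          rw [← Real.rpow_add' ha hsum, sub_add_cancel, Real.rpow_one]
      _ ≤ a ^ (1 - θ) * b ^ θ :=
          mul_le_mul_of_nonneg_left (Real.rpow_le_rpow ha h h0.le) (Real.rpow_nonneg ha _)
  · rw [min_eq_right h]
    calc b = b ^ (1 - θ) * b ^ θ := by
          rw [← Real.rpow_add' hb hsum, sub_add_cancel, Real.rpow_one]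
      _ ≤ a ^ (1 - θ) * b ^ θ :=
          mul_le_mul_of_nonneg_right (Real.rpow_le_rpow hb h (by linarith)) (Real.rpow_nonneg hb _)

set_option maxHeartbeats 2000000 in
theorem neumann_kernel_space_time_increment (α T : ℝ) (hα0 : 0 < α) (hα1 : α < 1 / 2)
    (hT : 0 < T) :
    ∃ C : ℝ, 0 < C ∧ ∀ t t' x x' : ℝ, 0 ≤ t → t ≤ t' → t' ≤ T →
      x ∈ Set.Icc (0 : ℝ) 1 → x' ∈ Set.Icc (0 : ℝ) 1 →
      (∫ s in (0 : ℝ)..t, ∫ y in (0 : ℝ)..1,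
          |GN (t - s) x y - GN (t' - s) x' y| ^ 2) ≤
        C * (|x' - x| ^ (2 * α) + |t' - t| ^ α) := by
  have hθ0 : 0 < 1 - α := by linarith
  -- the weight sequence
  have hw_sum : Summable (fun k : ℕ => ((1:ℝ) / ((k:ℝ)+1)^2) ^ (1 - α)) := by
    have hp : (-(2 - 2*α)) < -1 := by linarith
    have h1 : Summable (fun n : ℕ => (n:ℝ) ^ (-(2 - 2*α))) := Real.summable_nat_rpow.2 hp
    have h2 := (_root_.summable_nat_add_iff (f := fun n : ℕ => (n:ℝ) ^ (-(2 - 2*α))) 1).2 h1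
    refine h2.congr fun k => ?_
    have hk : (0:ℝ) < (k:ℝ) + 1 := by positivity
    have hcast : ((k + 1 : ℕ) : ℝ) = (k:ℝ) + 1 := by push_cast; ring
    have e1 : (1:ℝ) / ((k:ℝ)+1)^2 = ((k:ℝ)+1) ^ (-2 : ℝ) := by
      rw [Real.rpow_neg hk.le, Real.rpow_two, one_div]
    rw [hcast, e1, ← Real.rpow_mul hk.le]
    congr 1
    ring
  set w : ℕ → ℝ := fun k => ((1:ℝ) / ((k:ℝ)+1)^2) ^ (1 - α) with hwdef
  have hw0 : ∀ k, 0 ≤ w k := fun k => Real.rpow_nonneg (by positivity) _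
  set S := ∑' k, w k with hSdef
  have hS0 : 0 ≤ S := tsum_nonneg hw0
  refine ⟨8 * S + 1, by linarith, ?_⟩
  intro t t' x x' ht0 htt' hT' hx hx'
  have hτ0 : 0 ≤ t' - t := by linarith
  set δ := |x' - x| with hδdef
  have hδ0 : (0:ℝ) ≤ δ := abs_nonneg _
  set E := δ ^ (2*α) + (t' - t) ^ α with hEdef
  have hE0 : 0 ≤ E := add_nonneg (Real.rpow_nonneg hδ0 _) (Real.rpow_nonneg hτ0 _)
  have habs_t : |t' - t| = t' - t := abs_of_nonneg hτ0
  rw [habs_t]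
  -- continuity of the coefficient functions
  have hexpc : ∀ (c u : ℝ), Continuous (fun s : ℝ => Real.exp (-(c * (u - s)))) := by
    intro c u
    exact Real.continuous_exp.comp ((continuous_const.mul (continuous_const.sub continuous_id)).neg)
  have hFcont : ∀ k : ℕ, Continuous (fun s => coefG (t - s) x k - coefG (t' - s) x' k) := by
    intro k
    unfold coefG
    exact ((hexpc (lam k) t).mul continuous_const).sub ((hexpc (lam k) t').mul continuous_const)
  set P : ℕ → ℝ := fun k => Real.cos (((k:ℝ)+1) * π * x) - Real.cos (((k:ℝ)+1) * π * x')
    with hPdef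
  set Q : ℕ → ℝ := fun k => 1 - Real.exp (-(lam k * (t' - t))) with hQdef
  have hsplit : ∀ (k : ℕ) (s : ℝ), coefG (t - s) x k - coefG (t' - s) x' k
      = Real.exp (-(lam k * (t - s))) * (P k + Q k * Real.cos (((k:ℝ)+1) * π * x')) := by
    intro k s
    unfold coefG
    rw [show -(lam k * (t' - s)) = -(lam k * (t - s)) + -(lam k * (t' - t)) by ring,
      Real.exp_add]
    simp only [hPdef, hQdef]
    ring
  have hee : ∀ (k : ℕ) (s : ℝ), Real.exp (-(lam k * (t - s))) ^ 2
      = Real.exp (-(2 * lam k * (t - s))) := by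
    intro k s
    rw [sq, ← Real.exp_add]
    congr 1
    ring
  have hF2 : ∀ (k : ℕ) (s : ℝ), 2 * (coefG (t - s) x k - coefG (t' - s) x' k)^2
      ≤ 4 * (P k^2 + Q k^2) * Real.exp (-(2 * lam k * (t - s))) := by
    intro k s
    rw [hsplit k s]
    have hc2 : Real.cos (((k:ℝ)+1) * π * x')^2 ≤ 1 := Real.cos_sq_le_one _
    have key : (P k + Q k * Real.cos (((k:ℝ)+1) * π * x'))^2 ≤ 2 * (P k^2 + Q k^2) := by
      nlinarith [sq_nonneg (P k - Q k * Real.cos (((k:ℝ)+1) * π * x')), sq_nonneg (Q k),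
        mul_nonneg (sq_nonneg (Q k)) (sub_nonneg.2 hc2)]
    calc 2 * (Real.exp (-(lam k * (t - s))) * (P k + Q k * Real.cos (((k:ℝ)+1) * π * x')))^2
        = (2 * (P k + Q k * Real.cos (((k:ℝ)+1) * π * x'))^2)
            * Real.exp (-(lam k * (t - s)))^2 := by ring
      _ ≤ (2 * (2 * (P k^2 + Q k^2))) * Real.exp (-(lam k * (t - s)))^2 :=
          mul_le_mul_of_nonneg_right (by linarith) (sq_nonneg _)
      _ = 4 * (P k^2 + Q k^2) * Real.exp (-(2 * lam k * (t - s))) := by rw [hee]; ring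
  have hQ0 : ∀ k, 0 ≤ Q k := by
    intro k
    simp only [hQdef]
    have : Real.exp (-(lam k * (t' - t))) ≤ 1 :=
      Real.exp_le_one_iff.2 (neg_nonpos.2 (mul_nonneg (lam_pos k).le hτ0))
    linarith
  have hQ1 : ∀ k, Q k ≤ 1 := by
    intro k
    simp only [hQdef]
    linarith [Real.exp_pos (-(lam k * (t' - t)))]
  have hQle : ∀ k, Q k ≤ lam k * (t' - t) := by
    intro k
    simp only [hQdef]
    have := Real.add_one_le_exp (-(lam k * (t' - t)))
    linarith
  have hP2 : ∀ k, P k^2 ≤ 4 := by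
    intro k
    have h1 : |P k| ≤ 2 := by
      simp only [hPdef]
      calc |Real.cos (((k:ℝ)+1) * π * x) - Real.cos (((k:ℝ)+1) * π * x')|
          ≤ |Real.cos (((k:ℝ)+1) * π * x)| + |Real.cos (((k:ℝ)+1) * π * x')| := abs_sub _ _
        _ ≤ 1 + 1 := add_le_add (Real.abs_cos_le_one _) (Real.abs_cos_le_one _)
        _ = 2 := by norm_num
    nlinarith [abs_nonneg (P k), sq_abs (P k)]
  have hPlip : ∀ k, P k^2 ≤ lam k * δ^2 := by
    intro k
    have hpos : (0:ℝ) ≤ ((k:ℝ)+1) * π := by positivity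
    have h1 : |P k| ≤ ((k:ℝ)+1) * π * δ := by
      simp only [hPdef]
      calc |Real.cos (((k:ℝ)+1) * π * x) - Real.cos (((k:ℝ)+1) * π * x')|
          ≤ |((k:ℝ)+1) * π * x - ((k:ℝ)+1) * π * x'| := cos_lip _ _
        _ = ((k:ℝ)+1) * π * δ := by
            rw [← mul_sub, abs_mul, abs_of_nonneg hpos, hδdef, abs_sub_comm]
    have h2 : P k^2 ≤ (((k:ℝ)+1) * π * δ)^2 := by
      rw [← sq_abs (P k)]
      exact pow_le_pow_left₀ (abs_nonneg _) h1 2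
    calc P k^2 ≤ (((k:ℝ)+1) * π * δ)^2 := h2
      _ = lam k * δ^2 := by unfold lam; ring
  have hPm : ∀ k, P k^2 / lam k ≤ 4 * min (1 / lam k) (δ^2) := by
    intro k
    rcases le_total (δ^2) (1 / lam k) with h | h
    · rw [min_eq_right h, div_le_iff₀ (lam_pos k)]
      nlinarith [hPlip k, mul_nonneg (lam_pos k).le (sq_nonneg δ)]
    · rw [min_eq_left h, div_le_iff₀ (lam_pos k), one_div, mul_assoc,
        inv_mul_cancel₀ (ne_of_gt (lam_pos k)), mul_one]
      exact hP2 k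
  have hQm : ∀ k, Q k^2 / lam k ≤ min (1 / lam k) (t' - t) := by
    intro k
    rcases le_total (t' - t) (1 / lam k) with h | h
    · rw [min_eq_right h, div_le_iff₀ (lam_pos k)]
      nlinarith [hQ0 k, hQ1 k, hQle k]
    · rw [min_eq_left h, div_le_iff₀ (lam_pos k), one_div,
        inv_mul_cancel₀ (ne_of_gt (lam_pos k))]
      nlinarith [hQ0 k, hQ1 k]
  have hlam_inv : ∀ k, 1 / lam k ≤ 1 / ((k:ℝ)+1)^2 := by
    intro k
    apply one_div_le_one_div_of_le (by positivity) (sq_le_lam k)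
  have hmono : ∀ k, ((1:ℝ) / lam k) ^ (1 - α) ≤ w k := by
    intro k
    exact Real.rpow_le_rpow (div_nonneg zero_le_one (lam_pos k).le) (hlam_inv k) hθ0.le
  have hmin1 : ∀ k, min (1 / lam k) (δ^2) ≤ w k * δ ^ (2*α) := by
    intro k
    calc min (1 / lam k) (δ^2) ≤ ((1:ℝ) / lam k) ^ (1 - α) * (δ^2) ^ α :=
          min_le_rpow_mul (div_nonneg zero_le_one (lam_pos k).le) (sq_nonneg δ) hα0 (by linarith)
      _ ≤ w k * (δ^2) ^ α :=
          mul_le_mul_of_nonneg_right (hmono k) (Real.rpow_nonneg (sq_nonneg δ) _)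
      _ = w k * δ ^ (2*α) := by
          congr 1
          rw [show ((2:ℝ) * α) = (2:ℝ) * α from rfl, Real.rpow_mul hδ0, Real.rpow_two]
  have hmin2 : ∀ k, min (1 / lam k) (t' - t) ≤ w k * (t' - t) ^ α := by
    intro k
    calc min (1 / lam k) (t' - t) ≤ ((1:ℝ) / lam k) ^ (1 - α) * (t' - t) ^ α :=
          min_le_rpow_mul (div_nonneg zero_le_one (lam_pos k).le) hτ0 hα0 (by linarith)
      _ ≤ w k * (t' - t) ^ α :=
          mul_le_mul_of_nonneg_right (hmono k) (Real.rpow_nonneg hτ0 _)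
  -- per-k integral bound
  have hIk : ∀ k, (∫ s in Set.Ioo (0:ℝ) t, 2 * (coefG (t - s) x k - coefG (t' - s) x' k)^2)
      ≤ 8 * w k * E := by
    intro k
    have hcont2 : Continuous (fun s => 2 * (coefG (t - s) x k - coefG (t' - s) x' k)^2) :=
      continuous_const.mul ((hFcont k).pow 2)
    have hcontg : Continuous (fun s : ℝ =>
        4 * (P k^2 + Q k^2) * Real.exp (-(2 * lam k * (t - s)))) :=
      continuous_const.mul (hexpc (2 * lam k) t)
    have hint1 : IntegrableOn (fun s => 2 * (coefG (t - s) x k - coefG (t' - s) x' k)^2)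
        (Set.Ioo 0 t) := (hcont2.integrableOn_Ioc).mono_set Set.Ioo_subset_Ioc_self
    have hint2 : IntegrableOn (fun s : ℝ =>
        4 * (P k^2 + Q k^2) * Real.exp (-(2 * lam k * (t - s)))) (Set.Ioo 0 t) :=
      (hcontg.integrableOn_Ioc).mono_set Set.Ioo_subset_Ioc_self
    calc (∫ s in Set.Ioo (0:ℝ) t, 2 * (coefG (t - s) x k - coefG (t' - s) x' k)^2)
        ≤ ∫ s in Set.Ioo (0:ℝ) t, 4 * (P k^2 + Q k^2) * Real.exp (-(2 * lam k * (t - s))) :=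
          setIntegral_mono_on hint1 hint2 measurableSet_Ioo (fun s _ => hF2 k s)
      _ = 4 * (P k^2 + Q k^2) * ∫ s in Set.Ioo (0:ℝ) t, Real.exp (-(2 * lam k * (t - s))) :=
          integral_const_mul _ _
      _ ≤ 4 * (P k^2 + Q k^2) * (1 / (2 * lam k)) := by
          apply mul_le_mul_of_nonneg_left (int_exp_bound (mul_pos two_pos (lam_pos k)) ht0) (by positivity)
      _ = 2 * (P k^2 / lam k) + 2 * (Q k^2 / lam k) := by
          field_simp
          ring
      _ ≤ 2 * (4 * min (1 / lam k) (δ^2)) + 2 * min (1 / lam k) (t' - t) := by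
          have h1 := hPm k
          have h2 := hQm k
          linarith
      _ ≤ 8 * (w k * δ ^ (2*α)) + 8 * (w k * (t' - t) ^ α) := by
          have h1 := hmin1 k
          have h2 := hmin2 k
          have h3 : 0 ≤ w k * (t' - t) ^ α :=
            mul_nonneg (hw0 k) (Real.rpow_nonneg hτ0 _)
          linarith
      _ = 8 * w k * E := by rw [hEdef]; ring
  -- rewrite LHS using Parseval
  have hFull : (∫ s in (0:ℝ)..t, ∫ y in (0:ℝ)..1, |GN (t - s) x y - GN (t' - s) x' y| ^ 2)
      = ∫ s in Set.Ioo (0:ℝ) t, ∑' k, 2 * (coefG (t - s) x k - coefG (t' - s) x' k)^2 := by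
    rw [intervalIntegral.integral_of_le ht0, MeasureTheory.integral_Ioc_eq_integral_Ioo]
    apply MeasureTheory.setIntegral_congr_fun measurableSet_Ioo
    intro s hs
    dsimp only
    have hts : 0 < t - s := sub_pos.2 hs.2
    have hts' : 0 < t' - s := by
      have := hs.2
      linarith
    have hdsum : Summable fun k => |2 * (coefG (t - s) x k - coefG (t' - s) x' k)| := by
      apply Summable.of_nonneg_of_le (fun k => abs_nonneg _) _
        ((summable_exp_lam hts).mul_left 4)
      intro k
      have h1 := abs_coefG_le (t - s) x k
      have h2 := abs_coefG_le (t' - s) x' k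
      have h3 : Real.exp (-(lam k * (t' - s))) ≤ Real.exp (-(lam k * (t - s))) := by
        apply Real.exp_le_exp.2
        have := (lam_pos k).le
        nlinarith
      calc |2 * (coefG (t - s) x k - coefG (t' - s) x' k)|
          ≤ 2 * (|coefG (t - s) x k| + |coefG (t' - s) x' k|) := by
            rw [abs_mul]
            have := abs_sub (coefG (t - s) x k) (coefG (t' - s) x' k)
            rw [abs_two]
            linarith [abs_sub (coefG (t - s) x k) (coefG (t' - s) x' k)]
        _ ≤ 4 * Real.exp (-(lam k * (t - s))) := by linarith
    have hy : ∀ y : ℝ, |GN (t - s) x y - GN (t' - s) x' y| ^ 2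
        = (∑' k, (2 * (coefG (t - s) x k - coefG (t' - s) x' k)) * phi k y) ^ 2 := by
      intro y
      rw [sq_abs, GN_sub hts hts']
    rw [intervalIntegral.integral_congr (fun y _ => hy y),
      parseval _ hdsum]
    exact tsum_congr fun k => by ring
  rw [hFull]
  -- interchange integral and sum
  have hnnI : ∀ k, 0 ≤ ∫ s in Set.Ioo (0:ℝ) t,
      2 * (coefG (t - s) x k - coefG (t' - s) x' k)^2 := fun k =>
    setIntegral_nonneg measurableSet_Ioo (fun s _ => by positivity)
  have hwB : Summable (fun k => 8 * w k * E) := by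
    have := (hw_sum.mul_left 8).mul_right E
    simpa [mul_assoc] using this
  have hIsum : Summable (fun k => ∫ s in Set.Ioo (0:ℝ) t,
      2 * (coefG (t - s) x k - coefG (t' - s) x' k)^2) :=
    Summable.of_nonneg_of_le hnnI hIk hwB
  have hlam_sum : Summable fun k => 20 / lam k := by
    have base : Summable (fun n : ℕ => 1 / ((n:ℝ))^2) := by
      have := Real.summable_one_div_nat_rpow.2 (by norm_num : (1:ℝ) < 2)
      refine this.congr fun n => ?_
      rw [Real.rpow_two]
    have base1 := (_root_.summable_nat_add_iff (f := fun n : ℕ => 1 / ((n:ℝ))^2) 1).2 base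
    apply Summable.of_nonneg_of_le
      (fun k => div_nonneg (by norm_num) (lam_pos k).le) _ (base1.mul_left 20)
    intro k
    push_cast
    calc 20 / lam k = 20 * (1 / lam k) := by ring
      _ ≤ 20 * (1 / ((k:ℝ)+1)^2) := by
          have := hlam_inv k
          linarith
  have hcrude : ∀ (k : ℕ) (s : ℝ), 2 * (coefG (t - s) x k - coefG (t' - s) x' k)^2
      ≤ 20 * Real.exp (-(2 * lam k * (t - s))) := by
    intro k s
    have := hF2 k s
    have h4 : P k^2 + Q k^2 ≤ 5 := by nlinarith [hP2 k, hQ0 k, hQ1 k]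
    nlinarith [Real.exp_pos (-(2 * lam k * (t - s)))]
  have hswap : (∫ s in Set.Ioo (0:ℝ) t, ∑' k,
        2 * (coefG (t - s) x k - coefG (t' - s) x' k)^2)
      = ∑' k, ∫ s in Set.Ioo (0:ℝ) t,
        2 * (coefG (t - s) x k - coefG (t' - s) x' k)^2 := by
    apply MeasureTheory.integral_tsum
    · exact fun k => (continuous_const.mul ((hFcont k).pow 2)).aestronglyMeasurable
    · have hbk : ∀ k, (∫⁻ s in Set.Ioo (0:ℝ) t,
          ‖2 * (coefG (t - s) x k - coefG (t' - s) x' k)^2‖₊)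
          ≤ ENNReal.ofReal (20 / (2 * lam k)) := by
        intro k
        have hgcont : Continuous (fun s : ℝ => 20 * Real.exp (-(2 * lam k * (t - s)))) :=
          continuous_const.mul (hexpc (2 * lam k) t)
        have hgint : IntegrableOn (fun s : ℝ => 20 * Real.exp (-(2 * lam k * (t - s))))
            (Set.Ioo 0 t) := (hgcont.integrableOn_Ioc).mono_set Set.Ioo_subset_Ioc_self
        have hgnn : 0 ≤ᵐ[volume.restrict (Set.Ioo (0:ℝ) t)]
            fun s : ℝ => 20 * Real.exp (-(2 * lam k * (t - s))) :=
          Filter.Eventually.of_forall fun s => by positivity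
        calc (∫⁻ s in Set.Ioo (0:ℝ) t, ‖2 * (coefG (t - s) x k - coefG (t' - s) x' k)^2‖₊)
            ≤ ∫⁻ s in Set.Ioo (0:ℝ) t,
              ENNReal.ofReal (20 * Real.exp (-(2 * lam k * (t - s)))) := by
              apply lintegral_mono
              intro s
              dsimp only
              rw [← enorm_eq_nnnorm, ← ofReal_norm, Real.norm_eq_abs, abs_of_nonneg (by positivity)]
              exact ENNReal.ofReal_le_ofReal (hcrude k s)
          _ = ENNReal.ofReal (∫ s in Set.Ioo (0:ℝ) t,
              20 * Real.exp (-(2 * lam k * (t - s)))) :=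
              (MeasureTheory.ofReal_integral_eq_lintegral_ofReal hgint hgnn).symm
          _ ≤ ENNReal.ofReal (20 / (2 * lam k)) := by
              apply ENNReal.ofReal_le_ofReal
              rw [MeasureTheory.integral_const_mul]
              have hb := int_exp_bound (c := 2 * lam k) (mul_pos two_pos (lam_pos k)) ht0
              calc 20 * ∫ s in Set.Ioo (0:ℝ) t, Real.exp (-(2 * lam k * (t - s)))
                  ≤ 20 * (1 / (2 * lam k)) := by
                    apply mul_le_mul_of_nonneg_left hb (by norm_num)
                _ = 20 / (2 * lam k) := by ring
      have hsum20 : Summable fun k => 20 / (2 * lam k) := by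
        refine (hlam_sum.mul_left (1/2)).congr fun k => ?_
        field_simp
      have hle : (∑' k, ∫⁻ s in Set.Ioo (0:ℝ) t,
            ‖2 * (coefG (t - s) x k - coefG (t' - s) x' k)^2‖₊)
          ≤ ENNReal.ofReal (∑' k, 20 / (2 * lam k)) := by
        calc (∑' k, ∫⁻ s in Set.Ioo (0:ℝ) t,
              ‖2 * (coefG (t - s) x k - coefG (t' - s) x' k)^2‖₊)
            ≤ ∑' k, ENNReal.ofReal (20 / (2 * lam k)) := ENNReal.tsum_le_tsum hbk
          _ = ENNReal.ofReal (∑' k, 20 / (2 * lam k)) :=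
              (ENNReal.ofReal_tsum_of_nonneg
                (fun k => div_nonneg (by norm_num) (mul_pos two_pos (lam_pos k)).le)
                hsum20).symm
      exact ne_top_of_le_ne_top ENNReal.ofReal_ne_top hle
  rw [hswap]
  calc (∑' k, ∫ s in Set.Ioo (0:ℝ) t, 2 * (coefG (t - s) x k - coefG (t' - s) x' k)^2)
      ≤ ∑' k, 8 * w k * E := Summable.tsum_le_tsum hIk hIsum hwB
    _ = (∑' k, w k) * (8 * E) := by
        rw [← tsum_mul_right]
        exact tsum_congr fun k => by ring
    _ = S * (8 * E) := by rw [hSdef]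
    _ ≤ (8 * S + 1) * E := by nlinarith
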